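/- Viewing z² − z + 1 and f(z,w) as polynomials in z over ℤ[w] (of degrees 2 and 3 respectively), one has Res_z( z² − z + 1, f(z,w) ) = (w³ − 6w² + 3w + 1)². -/

import Mathlib

open Polynomial

/-- The Sylvester matrix of two polynomials `p`, `q` (with respect to their
natural degrees): the first `q.natDegree` rows contain the coefficients of `p`
in descending order, the remaining `p.natDegree` rows those of `q`. -/
noncomputable def sylvester {R : Type*} [CommRing R] (p q : R[X]) :
    Matrix (Fin (p.natDegree + q.natDegree)) (Fin (p.natDegree + q.natDegree)) R :=
  Matrix.of fun i j =>
    if (i : ℕ) < q.natDegree then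
      (if (i : ℕ) ≤ (j : ℕ) ∧ (j : ℕ) ≤ p.natDegree + (i : ℕ) then
        p.coeff (p.natDegree + (i : ℕ) - (j : ℕ)) else 0)
    else
      (if (i : ℕ) - q.natDegree ≤ (j : ℕ) ∧ (j : ℕ) ≤ q.natDegree + ((i : ℕ) - q.natDegree) then
        q.coeff (q.natDegree + ((i : ℕ) - q.natDegree) - (j : ℕ)) else 0)

/-- The resultant of two polynomials, i.e. the determinant of their Sylvester matrix. -/
noncomputable def resultant {R : Type*} [CommRing R] (p q : R[X]) : R :=
  (_root_.sylvester p q).det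

/-- `f(z,w) = w³ + (−z³+6z²−6z−1)w² + (z³−3z²+3z+1)w − z³`. -/
def fpoly {R : Type*} [CommRing R] (z w : R) : R :=
  w ^ 3 + (-z ^ 3 + 6 * z ^ 2 - 6 * z - 1) * w ^ 2 + (z ^ 3 - 3 * z ^ 2 + 3 * z + 1) * w - z ^ 3


section Aux
open Polynomial

private noncomputable def Paux : Polynomial (Polynomial ℤ) := X ^ 2 - X + 1
private noncomputable def Qaux : Polynomial (Polynomial ℤ) := fpoly X (C X)

private lemma hqform : (Qaux) =
    C (-X^2+X-1) * X^3 + C (6*X^2-3*X) * X^2 + C (-6*X^2+3*X) * X + C (X^3-X^2+X) := by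
  simp only [Qaux, fpoly, map_add, map_sub, map_mul, map_pow, map_neg, map_ofNat, map_one]
  ring

private lemma hPdeg : Paux.natDegree = 2 := by
  unfold Paux; compute_degree!

private lemma hQdeg : Qaux.natDegree = 3 := by
  rw [hqform]
  apply natDegree_cubic
  intro h
  have := congrArg (fun p => Polynomial.coeff p 2) h
  simp [coeff_X, coeff_one] at this

private lemma hP0 : Paux.coeff 0 = 1 := by unfold Paux; simp [coeff_one, coeff_X]
private lemma hP1 : Paux.coeff 1 = -1 := by unfold Paux; simp [coeff_one, coeff_X]
private lemma hP2 : Paux.coeff 2 = 1 := by unfold Paux; simp [coeff_one, coeff_X]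
private lemma hQ0 : Qaux.coeff 0 = X^3-X^2+X := by
  rw [hqform]; simp only [coeff_add, coeff_C_mul, coeff_X_pow, coeff_X, coeff_C]; norm_num
private lemma hQ1 : Qaux.coeff 1 = -6*X^2+3*X := by
  rw [hqform]; simp only [coeff_add, coeff_C_mul, coeff_X_pow, coeff_X, coeff_C]; norm_num
private lemma hQ2 : Qaux.coeff 2 = 6*X^2-3*X := by
  rw [hqform]; simp only [coeff_add, coeff_C_mul, coeff_X_pow, coeff_X, coeff_C]; norm_num
private lemma hQ3 : Qaux.coeff 3 = -X^2+X-1 := by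
  rw [hqform]; simp only [coeff_add, coeff_C_mul, coeff_X_pow, coeff_X, coeff_C]; norm_num

set_option maxHeartbeats 1000000 in
private lemma hMat :
    (Matrix.reindex (finCongr (show Paux.natDegree + Qaux.natDegree = 5 by
        rw [hPdeg, hQdeg])) (finCongr (show Paux.natDegree + Qaux.natDegree = 5 by
        rw [hPdeg, hQdeg])) (sylvester Paux Qaux)) =
        !![1, -1, 1, 0, 0;
           0, 1, -1, 1, 0;
           0, 0, 1, -1, 1;
           -X^2+X-1, 6*X^2-3*X, -6*X^2+3*X, X^3-X^2+X, 0;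
           0, -X^2+X-1, 6*X^2-3*X, -6*X^2+3*X, X^3-X^2+X] := by
  ext i j
  fin_cases i <;> fin_cases j <;>
    · simp only [Matrix.reindex_apply, Matrix.submatrix_apply, finCongr_symm, finCongr_apply,
        _root_.sylvester, Matrix.of_apply, Fin.coe_cast, hPdeg, hQdeg, Fin.isValue, Fin.val_zero]
      norm_num [hP0, hP1, hP2, hQ0, hQ1, hQ2, hQ3]

end Aux

set_option maxHeartbeats 1000000 in
theorem statement7 :
    _root_.resultant ((Polynomial.X : Polynomial (Polynomial ℤ)) ^ 2 - Polynomial.X + 1)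
      (fpoly Polynomial.X (Polynomial.C (Polynomial.X : Polynomial ℤ))) =
    ((Polynomial.X : Polynomial ℤ) ^ 3 - 6 * Polynomial.X ^ 2 + 3 * Polynomial.X + 1) ^ 2 := by
  open Polynomial in
  have key : _root_.resultant Paux Qaux =
      ((X : Polynomial ℤ) ^ 3 - 6 * X ^ 2 + 3 * X + 1) ^ 2 := by
    have h5 : Paux.natDegree + Qaux.natDegree = 5 := by rw [hPdeg, hQdeg]
    rw [_root_.resultant, ← Matrix.det_reindex_self (finCongr h5) (_root_.sylvester Paux Qaux), hMat]
    simp [Matrix.det_succ_row_zero, Fin.sum_univ_succ, Fin.succAbove]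
    ring
  simpa [Paux, Qaux] using key
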